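/- Let d ≥ 2 be an integer, β > 0 and k ∈ ℝ. Then d·Q̂_{SOS,β}(k) > Q̂_{SOS,β}(0) holds if and only if cos k > d − (d−1)·cosh β, where Q̂_{SOS,β}(k) = ∑_{n∈ℤ} exp(−β|n|)·cos(n·k). -/

import Mathlib

/-- Fourier transform of the SOS transfer operator at inverse temperature `β`. -/
noncomputable def sosFourier (β k : ℝ) : ℝ :=
  ∑' n : ℤ, Real.exp (-β * |(n : ℝ)|) * Real.cos (n * k)

open Complex in
lemma sos_nat_sum (r k : ℝ) (hr0 : 0 < r) (hr1 : r < 1) :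
    ∑' n : ℕ, r ^ n * Real.cos (n * k)
      = (1 - r * Real.cos k) / (1 - 2 * r * Real.cos k + r ^ 2) := by
  set z : ℂ := (r : ℂ) * Complex.exp (k * Complex.I) with hz
  have hzn : ‖z‖ < 1 := by
    rw [hz]
    simp only [norm_mul, Complex.norm_real, Real.norm_eq_abs,
      Complex.norm_exp_ofReal_mul_I, mul_one, abs_of_pos hr0]
    exact hr1
  have hre : ∀ n : ℕ, (z ^ n).re = r ^ n * Real.cos (n * k) := by
    intro n
    rw [hz, mul_pow, ← Complex.ofReal_pow, ← Complex.exp_nat_mul]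
    have : (n : ℂ) * ((k : ℂ) * Complex.I) = ((n * k : ℝ) : ℂ) * Complex.I := by
      push_cast; ring
    rw [this, Complex.re_ofReal_mul, Complex.exp_ofReal_mul_I_re]
  have hsum := summable_geometric_of_norm_lt_one hzn
  have h1 : ∑' n : ℕ, r ^ n * Real.cos (n * k) = ((1 - z)⁻¹).re := by
    rw [← tsum_geometric_of_norm_lt_one hzn, Complex.re_tsum hsum]
    exact tsum_congr fun n => (hre n).symm
  rw [h1, Complex.inv_re]
  have hzre : z.re = r * Real.cos k := by
    rw [hz, Complex.re_ofReal_mul, Complex.exp_ofReal_mul_I_re]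
  have hzim : z.im = r * Real.sin k := by
    rw [hz, Complex.im_ofReal_mul, Complex.exp_ofReal_mul_I_im]
  have hnsq : Complex.normSq (1 - z) = 1 - 2 * r * Real.cos k + r ^ 2 := by
    rw [Complex.normSq_apply]
    simp only [Complex.sub_re, Complex.sub_im, Complex.one_re, Complex.one_im, hzre, hzim]
    nlinarith [Real.sin_sq_add_cos_sq k]
  rw [hnsq]
  simp only [Complex.sub_re, Complex.one_re, hzre]

set_option maxHeartbeats 1000000 in
lemma sosFourier_eq (β k : ℝ) (hβ : 0 < β) :
    sosFourier β k = (1 - Real.exp (-β) ^ 2) /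
      (1 - 2 * Real.exp (-β) * Real.cos k + Real.exp (-β) ^ 2) := by
  set r := Real.exp (-β) with hrdef
  have hr0 : 0 < r := Real.exp_pos _
  have hr1 : r < 1 := Real.exp_lt_one_iff.mpr (by linarith)
  have hfn : ∀ n : ℕ, Real.exp (-β * |((n : ℤ) : ℝ)|) * Real.cos (((n : ℤ) : ℝ) * k)
      = r ^ n * Real.cos (n * k) := by
    intro n
    rw [hrdef, ← Real.exp_nat_mul]
    push_cast
    rw [abs_of_nonneg (Nat.cast_nonneg n)]
    ring_nf
  have hfneg : ∀ n : ℕ, Real.exp (-β * |((-(n + 1) : ℤ) : ℝ)|) * Real.cos (((-(n + 1) : ℤ) : ℝ) * k)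
      = r ^ (n + 1) * Real.cos ((n + 1) * k) := by
    intro n
    have h2 : Real.exp (-β * ((n : ℝ) + 1)) = r ^ (n + 1) := by
      rw [hrdef, ← Real.exp_nat_mul]
      push_cast
      ring_nf
    have h1 : ((-(n + 1) : ℤ) : ℝ) = -((n : ℝ) + 1) := by push_cast; ring
    rw [h1, abs_neg, abs_of_nonneg (by positivity : (0:ℝ) ≤ (n : ℝ) + 1),
      show -((n : ℝ) + 1) * k = -(((n : ℝ) + 1) * k) by ring, Real.cos_neg, h2]
  have hsummable : ∀ (g : ℕ → ℝ), (∀ n, |g n| ≤ r ^ n) → Summable g := by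
    intro g hg
    exact Summable.of_norm_bounded (summable_geometric_of_lt_one hr0.le hr1) hg
  have hs1 : Summable (fun n : ℕ => Real.exp (-β * |((n : ℤ) : ℝ)|) * Real.cos (((n : ℤ) : ℝ) * k)) := by
    apply hsummable
    intro n
    rw [hfn n, abs_mul, abs_of_pos (pow_pos hr0 n)]
    calc r ^ n * |Real.cos (n * k)| ≤ r ^ n * 1 := by
          exact mul_le_mul_of_nonneg_left (Real.abs_cos_le_one _) (pow_pos hr0 n).le
      _ = r ^ n := mul_one _
  have hs2 : Summable (fun n : ℕ => Real.exp (-β * |((-(n + 1) : ℤ) : ℝ)|) * Real.cos (((-(n + 1) : ℤ) : ℝ) * k)) := by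
    apply hsummable
    intro n
    rw [hfneg n, abs_mul, abs_of_pos (pow_pos hr0 (n + 1))]
    calc r ^ (n + 1) * |Real.cos ((n + 1) * k)| ≤ r ^ (n + 1) * 1 := by
          exact mul_le_mul_of_nonneg_left (Real.abs_cos_le_one _) (pow_pos hr0 _).le
      _ = r ^ (n + 1) := mul_one _
      _ ≤ r ^ n := pow_le_pow_of_le_one hr0.le hr1.le (Nat.le_succ n)
  have hsplit := tsum_of_nat_of_neg_add_one
    (f := fun n : ℤ => Real.exp (-β * |(n : ℝ)|) * Real.cos ((n : ℝ) * k)) hs1 hs2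
  unfold sosFourier
  rw [hsplit]
  have hS : ∑' n : ℕ, Real.exp (-β * |((n : ℤ) : ℝ)|) * Real.cos (((n : ℤ) : ℝ) * k)
      = (1 - r * Real.cos k) / (1 - 2 * r * Real.cos k + r ^ 2) := by
    rw [← sos_nat_sum r k hr0 hr1]
    exact tsum_congr hfn
  have hS2 : ∑' n : ℕ, Real.exp (-β * |((-(n + 1) : ℤ) : ℝ)|) * Real.cos (((-(n + 1) : ℤ) : ℝ) * k)
      = (1 - r * Real.cos k) / (1 - 2 * r * Real.cos k + r ^ 2) - 1 := by
    have h := sos_nat_sum r k hr0 hr1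
    have h0 : HasSum (fun n : ℕ => r ^ n * Real.cos (n * k))
        ((1 - r * Real.cos k) / (1 - 2 * r * Real.cos k + r ^ 2)) := by
      rw [← h]
      exact ((hs1.congr hfn).hasSum)
    have hsucc := (hasSum_nat_add_iff' 1).mpr h0
    simp only [Finset.range_one, Finset.sum_singleton, Nat.cast_zero, zero_mul,
      Real.cos_zero, pow_zero, one_mul] at hsucc
    have := hsucc.tsum_eq
    rw [← this]
    apply tsum_congr
    intro n
    rw [hfneg n]
    push_cast
    ring_nf
  rw [hS, hS2]
  have hD : 0 < 1 - 2 * r * Real.cos k + r ^ 2 := by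
    nlinarith [Real.neg_one_le_cos k, Real.cos_le_one k, sq_nonneg (1 - r)]
  rw [div_sub_one hD.ne', ← add_div]
  congr 1
  ring

theorem stmt16 (d : ℕ) (hd : 2 ≤ d) (β : ℝ) (hβ : 0 < β) (k : ℝ) :
    (d : ℝ) * sosFourier β k > sosFourier β 0 ↔
      Real.cos k > (d : ℝ) - ((d : ℝ) - 1) * Real.cosh β := by
  set r := Real.exp (-β) with hrdef
  have hr0 : 0 < r := Real.exp_pos _
  have hr1 : r < 1 := Real.exp_lt_one_iff.mpr (by linarith)
  have hd2 : (2 : ℝ) ≤ (d : ℝ) := by exact_mod_cast hd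
  set c := Real.cos k with hc
  have hD : 0 < 1 - 2 * r * c + r ^ 2 := by
    nlinarith [Real.neg_one_le_cos k, Real.cos_le_one k, sq_nonneg (1 - r)]
  have hE : 0 < 1 - 2 * r * 1 + r ^ 2 := by nlinarith [sq_nonneg (1 - r)]
  have h1r : 0 < 1 - r ^ 2 := by nlinarith
  have hcosh : Real.cosh β = (r⁻¹ + r) / 2 := by
    rw [Real.cosh_eq, hrdef, ← Real.exp_neg]
    ring_nf
  rw [sosFourier_eq β k hβ, sosFourier_eq β 0 hβ, Real.cos_zero, ← hrdef, ← hc, hcosh]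
  rw [gt_iff_lt, gt_iff_lt, mul_div_assoc' (d : ℝ), div_lt_div_iff₀ hE hD]
  have key : (d : ℝ) - ((d : ℝ) - 1) * ((r⁻¹ + r) / 2)
      = (1 + r ^ 2 - d * (1 - 2 * r + r ^ 2)) / (2 * r) := by
    field_simp
    ring
  rw [key, div_lt_iff₀ (by positivity : (0 : ℝ) < 2 * r)]
  constructor
  · intro h
    have h2 : 1 - 2 * r * c + r ^ 2 < d * (1 - 2 * r * 1 + r ^ 2) := by
      have := (mul_lt_mul_iff_of_pos_left h1r).mp (by nlinarith : (1 - r ^ 2) * (1 - 2 * r * c + r ^ 2) < (1 - r ^ 2) * (d * (1 - 2 * r * 1 + r ^ 2)))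
      linarith
    nlinarith
  · intro h
    nlinarith [mul_pos h1r hD, mul_pos h1r hE]
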